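/- Fix $r > 0$, $0 < \alpha \le 1$, $p \ge 1$, $N \ge 2$, and constants $0 < c \le C$. Suppose that for every function $v : \overline{B_r} \to \mathbb{R}$ in a class $\Sigma$ it holds that for each boundary point $x \in S_r$ and each $\sigma \in (0, r)$ there is a point $y = x - \sigma x/r$ with $|v(x) - v_{B_r}| \le |v(y) - v_{B_r}| + [v]_{\alpha,B_r}(\sigma/r)^{\alpha}$ and $|v(y) - v_{B_r}| \le (C/(c))^{N/p} (\sigma/r)^{-N/p}\, \|v - v_{B_r}\|_{p,B_r}$, where $\|w\|_{p,B_r} = \left(\frac{1}{|B_r|}\int_{B_r}|w|^p\right)^{1/p}$ and $[v]_{\alpha,B_r}$ is the scaling-invariant Hölder seminorm with constant $r^\alpha$. Then for every $v \in \Sigma$: $\max_{S_r} v - \min_{S_r} v \le 2\left(1 + \frac{\alpha p}{N}\right)\left(\frac{N}{\alpha p}\right)^{\alpha p/(N+\alpha p)}\left(\frac{C}{c}\right)^{\alpha N/(N+\alpha p)}\,[v]_{\alpha,B_r}^{N/(N+\alpha p)}\,\|v - v_{B_r}\|_{p,B_r}^{\alpha p/(N+\alpha p)}$. -/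

import Mathlib

open Metric Set


lemma stmt9_case_a (a b S B : ℝ) (ha : 0 < a) (hb : 0 < b) (hS : 0 ≤ S) (hB : 0 ≤ B)
    (h : S * (a / b) ≤ B) :
    S ≤ (1 + a / b) * (b / a) ^ (a / (a + b)) * S ^ (b / (a + b)) * B ^ (a / (a + b)) := by
  rcases eq_or_lt_of_le hS with hS0 | hS0
  · rw [← hS0]
    positivity
  have hE : 0 < a + b := by linarith
  have h1 : (b / a) ^ (a / (a + b)) * (S * (a / b)) ^ (a / (a + b)) = S ^ (a / (a + b)) := by
    rw [← Real.mul_rpow (by positivity) (by positivity)]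
    congr 1
    field_simp
  have h2 : S ^ (b / (a + b)) * S ^ (a / (a + b)) = S := by
    rw [← Real.rpow_add hS0, show b / (a + b) + a / (a + b) = 1 by field_simp; ring,
      Real.rpow_one]
  have hZ : (0:ℝ) ≤ (b / a) ^ (a / (a + b)) * S ^ (b / (a + b)) * B ^ (a / (a + b)) := by
    positivity
  calc S = (b / a) ^ (a / (a + b)) * S ^ (b / (a + b)) * (S * (a / b)) ^ (a / (a + b)) := by
        rw [mul_comm ((b / a) ^ (a / (a + b))) (S ^ (b / (a + b))), mul_assoc, h1, h2]
    _ ≤ (b / a) ^ (a / (a + b)) * S ^ (b / (a + b)) * B ^ (a / (a + b)) := by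
        gcongr
    _ ≤ (1 + a / b) * ((b / a) ^ (a / (a + b)) * S ^ (b / (a + b)) * B ^ (a / (a + b))) :=
        le_mul_of_one_le_left hZ (by have := div_pos ha hb; linarith)
    _ = (1 + a / b) * (b / a) ^ (a / (a + b)) * S ^ (b / (a + b)) * B ^ (a / (a + b)) := by ring

lemma stmt9_case_b (a b S B : ℝ) (ha : 0 < a) (hb : 0 < b) (hS : 0 < S) (hB : 0 < B) :
    S * ((B * b / (S * a)) ^ (a + b)⁻¹) ^ a + B * ((B * b / (S * a)) ^ (a + b)⁻¹) ^ (-b)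
      = (1 + a / b) * (b / a) ^ (a / (a + b)) * S ^ (b / (a + b)) * B ^ (a / (a + b)) := by
  have hE : 0 < a + b := by linarith
  have hX : 0 < B * b / (S * a) := by positivity
  have hab : 0 < a / b := by positivity
  have hba : 0 < b / a := by positivity
  have hlX : Real.log (B * b / (S * a)) =
      Real.log B + Real.log b - (Real.log S + Real.log a) := by
    rw [Real.log_div (by positivity) (by positivity), Real.log_mul hB.ne' hb.ne',
      Real.log_mul hS.ne' ha.ne']
  have hlba : Real.log (b / a) = Real.log b - Real.log a := Real.log_div hb.ne' ha.ne'
  have hlab : Real.log (a / b) = Real.log a - Real.log b := Real.log_div ha.ne' hb.ne'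
  have hmul : ∀ x y : ℝ, 0 < x → x * Real.exp y = Real.exp (Real.log x + y) := by
    intro x y hx
    rw [Real.exp_add, Real.exp_log hx]
  have ht : ∀ y : ℝ, ((B * b / (S * a)) ^ (a + b)⁻¹) ^ y
      = (B * b / (S * a)) ^ ((a + b)⁻¹ * y) := fun y => (Real.rpow_mul hX.le _ _).symm
  have e1 : S * (B * b / (S * a)) ^ ((a + b)⁻¹ * a)
      = (b / a) ^ (a / (a + b)) * S ^ (b / (a + b)) * B ^ (a / (a + b)) := by
    rw [Real.rpow_def_of_pos hX, Real.rpow_def_of_pos hba, Real.rpow_def_of_pos hS,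
      Real.rpow_def_of_pos hB]
    rw [hmul _ _ hS, ← Real.exp_add, ← Real.exp_add, Real.exp_eq_exp, hlX, hlba]
    field_simp
    ring
  have e2 : B * (B * b / (S * a)) ^ ((a + b)⁻¹ * (-b))
      = (a / b) ^ (b / (a + b)) * S ^ (b / (a + b)) * B ^ (a / (a + b)) := by
    rw [Real.rpow_def_of_pos hX, Real.rpow_def_of_pos hab, Real.rpow_def_of_pos hS,
      Real.rpow_def_of_pos hB]
    rw [hmul _ _ hB, ← Real.exp_add, ← Real.exp_add, Real.exp_eq_exp, hlX, hlab]
    field_simp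
    ring
  have e3 : (a / b) ^ (b / (a + b)) = (a / b) * (b / a) ^ (a / (a + b)) := by
    rw [Real.rpow_def_of_pos hab, Real.rpow_def_of_pos hba]
    rw [hmul _ _ hab, Real.exp_eq_exp, hlab, hlba]
    field_simp
    ring
  rw [ht, ht, e1, e2, e3]
  ring

set_option maxHeartbeats 1000000 in
/-- Abstract version of Lemma 2.2: from the Hölder seminorm bound and the two
pointwise estimates (from the mean value property), the oscillation of `v` on
the sphere `S_r` satisfies the interpolation inequality. Here `S` plays the role
of `[v]_{α,B_r}` and `L` of `‖v - v_{B_r}‖_{p,B_r}`. -/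
theorem stmt9 (N : ℕ) (hN : 2 ≤ N) (r α p c C S L : ℝ) (hr : 0 < r)
    (hα : α ∈ Ioc (0 : ℝ) 1) (hp : 1 ≤ p) (hc : 0 < c) (hcC : c ≤ C)
    (hS : 0 ≤ S) (hL : 0 ≤ L)
    (v : EuclideanSpace ℝ (Fin N) → ℝ) (vavg : ℝ)
    (hHol : ∀ x1 ∈ closedBall (0 : EuclideanSpace ℝ (Fin N)) r,
      ∀ x2 ∈ closedBall (0 : EuclideanSpace ℝ (Fin N)) r,
        |v x1 - v x2| ≤ S * (‖x1 - x2‖ / r) ^ α)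
    (hest : ∀ x ∈ sphere (0 : EuclideanSpace ℝ (Fin N)) r, ∀ σ ∈ Ioo (0 : ℝ) r,
      |v x - vavg| ≤ |v (x - (σ / r) • x) - vavg| + S * (σ / r) ^ α ∧
      |v (x - (σ / r) • x) - vavg| ≤ (C / c) ^ ((N : ℝ) / p) * (σ / r) ^ (-(N : ℝ) / p) * L) :
    ∀ x1 ∈ sphere (0 : EuclideanSpace ℝ (Fin N)) r,
      ∀ x2 ∈ sphere (0 : EuclideanSpace ℝ (Fin N)) r,
        v x1 - v x2 ≤ 2 * (1 + α * p / N) * (N / (α * p)) ^ (α * p / (N + α * p)) *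
          (C / c) ^ (α * N / (N + α * p)) * S ^ ((N : ℝ) / (N + α * p)) *
          L ^ (α * p / (N + α * p)) := by
  intro x1 hx1 x2 hx2
  obtain ⟨hα0, hα1⟩ := hα
  have hp0 : (0:ℝ) < p := lt_of_lt_of_le one_pos hp
  have hN0 : (0:ℝ) < N := by
    have : (0:ℕ) < N := by omega
    exact_mod_cast this
  have hCc0 : (0:ℝ) < C / c := div_pos (lt_of_lt_of_le hc hcC) hc
  have hb : 0 < (N:ℝ) / p := div_pos hN0 hp0
  set b : ℝ := (N:ℝ) / p with hbdef
  have hE : 0 < α + b := by linarith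
  have hE' : α + b ≠ 0 := hE.ne'
  have hNαp : 0 < (N:ℝ) + α * p := by positivity
  set K : ℝ := (C / c) ^ b with hKdef
  have hK : 0 < K := Real.rpow_pos_of_pos hCc0 _
  -- exponent conversions
  have ea : α / (α + b) = α * p / ((N:ℝ) + α * p) := by
    rw [div_eq_div_iff hE' hNαp.ne', hbdef]
    field_simp
    ring
  have eb : b / (α + b) = (N:ℝ) / ((N:ℝ) + α * p) := by
    rw [div_eq_div_iff hE' hNαp.ne', hbdef]
    field_simp
    ring
  have eab : α / b = α * p / (N:ℝ) := by rw [hbdef, div_div_eq_mul_div]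
  have eba : b / α = (N:ℝ) / (α * p) := by rw [hbdef, div_div, mul_comm]
  have emul : b * (α / (α + b)) = α * (N:ℝ) / ((N:ℝ) + α * p) := by
    rw [ea, hbdef, div_mul_div_comm, div_eq_div_iff (by positivity) hNαp.ne']
    ring
  have hKL : (K * L) ^ (α / (α + b)) =
      (C / c) ^ (α * (N:ℝ) / ((N:ℝ) + α * p)) * L ^ (α * p / ((N:ℝ) + α * p)) := by
    rw [Real.mul_rpow hK.le hL, hKdef, ← Real.rpow_mul hCc0.le, emul, ea]
  -- M is the interpolation bound in (α, b)-form
  set M : ℝ := (1 + α / b) * (b / α) ^ (α / (α + b)) * S ^ (b / (α + b)) *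
      (K * L) ^ (α / (α + b)) with hMdef
  have hfinal : v x1 - v x2 ≤ 2 * M → v x1 - v x2 ≤
      2 * (1 + α * p / N) * (N / (α * p)) ^ (α * p / (N + α * p)) *
        (C / c) ^ (α * N / (N + α * p)) * S ^ ((N : ℝ) / (N + α * p)) *
        L ^ (α * p / (N + α * p)) := by
    intro h
    calc v x1 - v x2 ≤ 2 * M := h
      _ = 2 * (1 + α * p / N) * (N / (α * p)) ^ (α * p / (N + α * p)) *
          (C / c) ^ (α * N / (N + α * p)) * S ^ ((N : ℝ) / (N + α * p)) *
          L ^ (α * p / (N + α * p)) := by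
        rw [hMdef, hKL, ea, eb, eab, eba]
        ring
  apply hfinal
  by_cases hcase : S * (α / b) ≤ K * L
  · -- Hölder route: oscillation ≤ 2 S ≤ 2 M
    have hn1 : ‖x1‖ = r := mem_sphere_zero_iff_norm.mp hx1
    have hn2 : ‖x2‖ = r := mem_sphere_zero_iff_norm.mp hx2
    have hHo := hHol x1 (sphere_subset_closedBall hx1) x2 (sphere_subset_closedBall hx2)
    have hnn : ‖x1 - x2‖ / r ≤ 2 := by
      rw [div_le_iff₀ hr]
      calc ‖x1 - x2‖ ≤ ‖x1‖ + ‖x2‖ := norm_sub_le _ _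
        _ = 2 * r := by rw [hn1, hn2]; ring
    have h2a : (‖x1 - x2‖ / r) ^ α ≤ (2:ℝ) ^ α :=
      Real.rpow_le_rpow (by positivity) hnn hα0.le
    have h2b : (2:ℝ) ^ α ≤ 2 := by
      calc (2:ℝ) ^ α ≤ (2:ℝ) ^ (1:ℝ) := Real.rpow_le_rpow_of_exponent_le one_le_two hα1
        _ = 2 := Real.rpow_one 2
    have hvS : v x1 - v x2 ≤ 2 * S := by
      have h1 := le_abs_self (v x1 - v x2)
      nlinarith [hHo, h2a, h2b, hS, Real.rpow_nonneg (by positivity : (0:ℝ) ≤ ‖x1 - x2‖ / r) α]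
    have hSM : S ≤ M := by
      rw [hMdef]
      exact stmt9_case_a α b S (K * L) hα0 hb hS (mul_nonneg hK.le hL) hcase
    linarith
  · push_neg at hcase
    have hSpos : 0 < S := by
      rcases hS.lt_or_eq with h | h
      · exact h
      · exfalso
        rw [← h, zero_mul] at hcase
        exact absurd hcase (not_lt.mpr (mul_nonneg hK.le hL))
    rcases hL.lt_or_eq with hLpos | hL0
    · -- interior optimum
      have hBpos : 0 < K * L := mul_pos hK hLpos
      have hcase' : K * L * b < S * α := by
        rw [← mul_div_assoc] at hcase
        calc K * L * b < (S * α / b) * b := mul_lt_mul_of_pos_right hcase hb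
          _ = S * α := by field_simp
      set t : ℝ := (K * L * b / (S * α)) ^ (α + b)⁻¹ with htdef
      have hX1 : K * L * b / (S * α) < 1 := by
        rw [div_lt_one (mul_pos hSpos hα0)]
        exact hcase'
      have hX0 : 0 < K * L * b / (S * α) :=
        div_pos (mul_pos hBpos hb) (mul_pos hSpos hα0)
      have ht0 : 0 < t := Real.rpow_pos_of_pos hX0 _
      have ht1 : t < 1 := Real.rpow_lt_one hX0.le hX1 (inv_pos.mpr hE)
      have hσ : t * r ∈ Ioo (0:ℝ) r := ⟨mul_pos ht0 hr, by nlinarith [ht1, hr, ht0]⟩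
      have hσr : t * r / r = t := by rw [mul_div_assoc, div_self hr.ne', mul_one]
      have hbound : ∀ x ∈ sphere (0 : EuclideanSpace ℝ (Fin N)) r, |v x - vavg| ≤ M := by
        intro x hx
        obtain ⟨h1, h2⟩ := hest x hx (t * r) hσ
        rw [hσr] at h1 h2
        have hneg : -(N:ℝ) / p = -b := by rw [hbdef, neg_div]
        rw [hneg] at h2
        have hval := stmt9_case_b α b S (K * L) hα0 hb hSpos hBpos
        rw [hMdef]
        calc |v x - vavg| ≤ K * t ^ (-b) * L + S * t ^ α := by linarith
          _ = S * t ^ α + K * L * t ^ (-b) := by ring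
          _ = (1 + α / b) * (b / α) ^ (α / (α + b)) * S ^ (b / (α + b)) *
              (K * L) ^ (α / (α + b)) := by rw [← hval, htdef]
      have b1 := hbound x1 hx1
      have b2 := hbound x2 hx2
      have l1 := le_abs_self (v x1 - vavg)
      have l2 := neg_abs_le (v x2 - vavg)
      linarith
    · -- L = 0 : v ≡ vavg on the sphere
      have hM0 : M = 0 := by
        rw [hMdef, ← hL0, mul_zero, Real.zero_rpow (by positivity : α / (α + b) ≠ 0)]
        ring
      have hzero : ∀ x ∈ sphere (0 : EuclideanSpace ℝ (Fin N)) r, |v x - vavg| ≤ 0 := by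
        intro x hx
        have hεbound : ∀ ε > (0:ℝ), |v x - vavg| ≤ 0 + ε := by
          intro ε hε
          set t : ℝ := min ((ε / (S + 1)) ^ α⁻¹) 2⁻¹ with htdef
          have ht0 : 0 < t :=
            lt_min (Real.rpow_pos_of_pos (by positivity) _) (by norm_num)
          have ht1 : t < 1 := lt_of_le_of_lt (min_le_right _ _) (by norm_num)
          have hσ : t * r ∈ Ioo (0:ℝ) r := ⟨mul_pos ht0 hr, by nlinarith [ht1, hr, ht0]⟩
          have hσr : t * r / r = t := by rw [mul_div_assoc, div_self hr.ne', mul_one]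
          obtain ⟨h1, h2⟩ := hest x hx (t * r) hσ
          rw [hσr] at h1 h2
          rw [← hL0, mul_zero] at h2
          have h3 : S * t ^ α ≤ ε := by
            have e1 : t ^ α ≤ ((ε / (S + 1)) ^ α⁻¹) ^ α :=
              Real.rpow_le_rpow ht0.le (min_le_left _ _) hα0.le
            have e2 : ((ε / (S + 1)) ^ α⁻¹) ^ α = ε / (S + 1) := by
              rw [← Real.rpow_mul (by positivity), inv_mul_cancel₀ hα0.ne', Real.rpow_one]
            have e3 : 0 ≤ t ^ α := Real.rpow_nonneg ht0.le α
            have e4 : S * t ^ α ≤ (S + 1) * t ^ α := by nlinarith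
            have e5 : (S + 1) * t ^ α ≤ (S + 1) * (ε / (S + 1)) := by
              rw [← e2]
              exact mul_le_mul_of_nonneg_left e1 (by linarith)
            have e6 : (S + 1) * (ε / (S + 1)) = ε := by field_simp
            linarith
          linarith
        linarith [le_of_forall_pos_le_add hεbound]
      have z1 := hzero x1 hx1
      have z2 := hzero x2 hx2
      have l1 := le_abs_self (v x1 - vavg)
      have l2 := neg_abs_le (v x2 - vavg)
      rw [hM0]
      linarith
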